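/- (Local Solution Theorem 1) Let z M : ℤ with M ≠ 0, and let S_M := {p : ℝ × ℝ | p.1^2 + z*p.1*p.2 + p.2^2 = M}. Then there exist x y : ℤ with x^2 + z*x*y + y^2 = M if and only if S_M is nonempty and for every α ∈ S_M there exist x y : ℤ with ((x:ℝ), (y:ℝ)) ∈ B_α, where B_α is the subbranch of S_M with respect to α. -/
import Mathlib


/-- The level set `S_M ⊆ ℝ × ℝ` of `x² + zxy + y² = M`. -/
def levelSet (z M : ℤ) : Set (ℝ × ℝ) :=
  {p : ℝ × ℝ | p.1 ^ 2 + (z : ℝ) * p.1 * p.2 + p.2 ^ 2 = (M : ℝ)}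

/-- The oriented area of two plane vectors. -/
def orientedArea (α β : ℝ × ℝ) : ℝ := α.1 * β.2 - α.2 * β.1

/-- Multiplication by the positive imaginary unit `i_z`. -/
def Iplus (z : ℤ) (α : ℝ × ℝ) : ℝ × ℝ := (-α.2, α.1 + (z : ℝ) * α.2)

/-- Multiplication by the negative imaginary unit `-i_z`. -/
def Iminus (z : ℤ) (α : ℝ × ℝ) : ℝ × ℝ := (α.2, -α.1 - (z : ℝ) * α.2)

/-- The subbranch of `S_M` with respect to `α`. -/
def subbranch (z M : ℤ) (α : ℝ × ℝ) : Set (ℝ × ℝ) :=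
  if 0 ≤ z then
    if 0 < M then
      {β ∈ levelSet z M | 0 ≤ orientedArea α β ∧ orientedArea (Iplus z α) β < 0}
    else
      {β ∈ levelSet z M | orientedArea α β ≤ 0 ∧ 0 < orientedArea (Iplus z α) β}
  else
    if 0 < M then
      {β ∈ levelSet z M | orientedArea α β ≤ 0 ∧ 0 < orientedArea (Iminus z α) β}
    else
      {β ∈ levelSet z M | 0 ≤ orientedArea α β ∧ orientedArea (Iminus z α) β < 0}

/-- Easy cases of the fundamental-domain descent: if `(u, v)` has `u > 0 > v` and
`u + zv ≥ 0` or `zu + v ≤ 0`, then a unit of the ring `ℤ[i_z]` moves `(u,v)` into the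
sector `{first > 0, second ≥ 0}` in at most two steps. -/
lemma stmt4._easyCase (z : ℤ) (hz : 0 ≤ z) (u v : ℝ)
    (hu : 0 < u) (hv : v < 0)
    (hcase : 0 ≤ u + (z:ℝ)*v ∨ (z:ℝ)*u + v ≤ 0) :
    ∃ a b : ℤ, a^2 + z*a*b + b^2 = 1 ∧
      0 < (a:ℝ)*u - (b:ℝ)*v ∧ 0 ≤ (a:ℝ)*v + (b:ℝ)*u + (z:ℝ)*(b:ℝ)*v := by
  have hzr : (0:ℝ) ≤ (z:ℝ) := by exact_mod_cast hz
  rcases hcase with h | h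
  · exact ⟨0, 1, by ring, by push_cast; linarith, by push_cast; linarith⟩
  · rcases lt_or_eq_of_le h with h' | h'
    · exact ⟨-z, 1, by ring, by push_cast; linarith, by push_cast; linarith⟩
    · refine ⟨1 - z^2, z, by ring, ?_, ?_⟩
      · push_cast
        nlinarith [hu, h', hzr, sq_nonneg ((z:ℝ))]
      · push_cast
        linarith [h'.ge, h'.le]

/-- The descent: any point `(u, v)` with `u > 0 > v` on the level curve
`u² + zuv + v² = K > 0` can be moved by a unit of `ℤ[i_z]` into the sector
`{first > 0, second ≥ 0}`.  Induction on a bound `n` for `z·u·(-v)/K`. -/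
lemma stmt4._descent (z : ℤ) (hz : 0 ≤ z) (K : ℝ) (hK : 0 < K) :
    ∀ n : ℕ, ∀ u v : ℝ, u^2 + (z:ℝ)*u*v + v^2 = K → 0 < u → v < 0 →
      (z:ℝ)*u*(-v) ≤ (n:ℝ)*K →
      ∃ a b : ℤ, a^2 + z*a*b + b^2 = 1 ∧
        0 < (a:ℝ)*u - (b:ℝ)*v ∧ 0 ≤ (a:ℝ)*v + (b:ℝ)*u + (z:ℝ)*(b:ℝ)*v := by
  have hzr : (0:ℝ) ≤ (z:ℝ) := by exact_mod_cast hz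
  intro n
  induction n with
  | zero =>
    intro u v hQ hu hv hb
    apply stmt4._easyCase z hz u v hu hv
    by_contra hc
    push_neg at hc
    obtain ⟨h1, h2⟩ := hc
    simp only [Nat.cast_zero, zero_mul] at hb
    nlinarith [mul_pos hu (show (0:ℝ) < -u - (z:ℝ)*v by linarith), mul_pos hu hu]
  | succ n ih =>
    intro u v hQ hu hv hb
    by_cases h1 : 0 ≤ u + (z:ℝ)*v
    · exact stmt4._easyCase z hz u v hu hv (Or.inl h1)
    by_cases h2 : (z:ℝ)*u + v ≤ 0
    · exact stmt4._easyCase z hz u v hu hv (Or.inr h2)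
    push_neg at h1 h2
    push_cast at hb
    rcases le_or_gt (-v) u with hcase | hcase
    · -- multiply by `i_z` : new point `(-v, u + z v)`
      have hQ' : (-v)^2 + (z:ℝ)*(-v)*(u+(z:ℝ)*v) + (u+(z:ℝ)*v)^2 = K := by
        linear_combination hQ
      have key : K ≤ (z:ℝ)*(-v)*(2*u - (z:ℝ)*(-v)) := by
        nlinarith [mul_pos (show (0:ℝ) < (z:ℝ)*(-v) - u by linarith)
            (show (0:ℝ) < 2*u - (z:ℝ)*(-v) by
              nlinarith [mul_pos hu (show (0:ℝ) < -v by linarith), hQ, hK,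
                mul_nonneg (show (0:ℝ) ≤ -v by linarith)
                  (show (0:ℝ) ≤ u - (-v) by linarith)]),
          mul_nonneg (show (0:ℝ) ≤ u - (-v) by linarith)
            (show (0:ℝ) ≤ u + (-v) by linarith), hQ]
      have hbound : (z:ℝ)*(-v)*(-(u+(z:ℝ)*v)) ≤ (n:ℝ)*K := by nlinarith [key, hb]
      obtain ⟨a, b, hn1, hn2, hn3⟩ := ih (-v) (u+(z:ℝ)*v) hQ' (by linarith) h1 hbound
      refine ⟨-b, a + z*b, by linear_combination hn1, ?_, ?_⟩
      · push_cast; linarith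
      · push_cast; linarith
    · -- multiply by `conj i_z` : new point `(z u + v, -u)`
      have hQ' : ((z:ℝ)*u+v)^2 + (z:ℝ)*((z:ℝ)*u+v)*(-u) + (-u)^2 = K := by
        linear_combination hQ
      have key : K ≤ (z:ℝ)*u*(2*(-v) - (z:ℝ)*u) := by
        nlinarith [mul_pos (show (0:ℝ) < (z:ℝ)*u - (-v) by linarith)
            (show (0:ℝ) < 2*(-v) - (z:ℝ)*u by
              nlinarith [mul_pos (show (0:ℝ) < -v by linarith) hu, hQ, hK,
                mul_nonneg (show (0:ℝ) ≤ u by linarith)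
                  (show (0:ℝ) ≤ (-v) - u by linarith)]),
          mul_nonneg (show (0:ℝ) ≤ (-v) - u by linarith)
            (show (0:ℝ) ≤ (-v) + u by linarith), hQ]
      have hbound : (z:ℝ)*((z:ℝ)*u+v)*(-(-u)) ≤ (n:ℝ)*K := by nlinarith [key, hb]
      obtain ⟨a, b, hn1, hn2, hn3⟩ := ih ((z:ℝ)*u+v) (-u) hQ' h2 (by linarith) hbound
      refine ⟨a*z + b, -a, by linear_combination hn1, ?_, ?_⟩
      · push_cast; linarith
      · push_cast; linarith

/-- Any point of the positive level curve `u² + zuv + v² = K > 0` (for `z ≥ 0`) can be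
moved by a unit of `ℤ[i_z]` into the sector `{first > 0, second ≥ 0}`. -/
lemma stmt4._crux (z : ℤ) (hz : 0 ≤ z) (K : ℝ) (hK : 0 < K) (u v : ℝ)
    (hQ : u^2 + (z:ℝ)*u*v + v^2 = K) :
    ∃ a b : ℤ, a^2 + z*a*b + b^2 = 1 ∧
      0 < (a:ℝ)*u - (b:ℝ)*v ∧ 0 ≤ (a:ℝ)*v + (b:ℝ)*u + (z:ℝ)*(b:ℝ)*v := by
  rcases lt_trichotomy u 0 with hu | hu | hu
  · rcases le_or_gt v 0 with hv | hv
    · exact ⟨-1, 0, by ring, by push_cast; linarith, by push_cast; linarith⟩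
    · have hQ' : (-u)^2 + (z:ℝ)*(-u)*(-v) + (-v)^2 = K := by linear_combination hQ
      obtain ⟨n, hn⟩ := exists_nat_ge ((z:ℝ)*(-u)*v / K)
      have hbound : (z:ℝ)*(-u)*(-(-v)) ≤ (n:ℝ)*K := by
        rw [div_le_iff₀ hK] at hn; simpa using hn
      obtain ⟨a, b, h1, h2, h3⟩ :=
        stmt4._descent z hz K hK n (-u) (-v) hQ' (by linarith) (by linarith) hbound
      exact ⟨-a, -b, by linear_combination h1,
        by push_cast; linarith, by push_cast; linarith⟩
  · subst hu
    have hv : v ≠ 0 := by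
      intro h; rw [h] at hQ; norm_num at hQ; linarith
    rcases hv.lt_or_gt with hv | hv
    · exact ⟨-z, 1, by ring, by push_cast; linarith, by push_cast; linarith⟩
    · exact ⟨z, -1, by ring, by push_cast; linarith, by push_cast; linarith⟩
  · rcases le_or_gt 0 v with hv | hv
    · exact ⟨1, 0, by ring, by push_cast; linarith, by push_cast; linarith⟩
    · obtain ⟨n, hn⟩ := exists_nat_ge ((z:ℝ)*u*(-v) / K)
      have hbound : (z:ℝ)*u*(-v) ≤ (n:ℝ)*K := by
        rw [div_le_iff₀ hK] at hn; exact hn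
      exact stmt4._descent z hz K hK n u v hQ hu hv hbound

theorem stmt4 (z M : ℤ) (hM : M ≠ 0) :
    (∃ x y : ℤ, x ^ 2 + z * x * y + y ^ 2 = M) ↔
      (levelSet z M).Nonempty ∧
        ∀ α ∈ levelSet z M, ∃ x y : ℤ,
          (((x : ℝ), (y : ℝ)) : ℝ × ℝ) ∈ subbranch z M α := by
  constructor
  · rintro ⟨x₀, y₀, h₀⟩
    have hb : (x₀:ℝ)^2 + (z:ℝ)*(x₀:ℝ)*(y₀:ℝ) + (y₀:ℝ)^2 = (M:ℝ) := by
      exact_mod_cast congrArg (Int.cast : ℤ → ℝ) h₀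
    constructor
    · exact ⟨((x₀:ℝ), (y₀:ℝ)), hb⟩
    intro α hα
    obtain ⟨A, B⟩ := α
    simp only [levelSet, Set.mem_setOf_eq] at hα
    have hKpos : (0:ℝ) < (M:ℝ)*(M:ℝ) :=
      mul_self_pos.mpr (Int.cast_ne_zero.mpr hM)
    have hQg : (A*x₀ + (z:ℝ)*B*x₀ + B*y₀)^2
        + (z:ℝ)*(A*x₀ + (z:ℝ)*B*x₀ + B*y₀)*(A*y₀ - B*x₀)
        + (A*y₀ - B*x₀)^2 = (M:ℝ)*(M:ℝ) := by
      linear_combination ((x₀:ℝ)^2 + (z:ℝ)*(x₀:ℝ)*(y₀:ℝ) + (y₀:ℝ)^2) * hα + (M:ℝ) * hb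
    set g₁ : ℝ := A*x₀ + (z:ℝ)*B*x₀ + B*y₀ with hg1
    set g₂ : ℝ := A*y₀ - B*x₀ with hg2
    rcases le_or_gt 0 z with hz | hz
    · have h1R : ∀ a b : ℤ, a^2 + z*a*b + b^2 = 1 →
          (a:ℝ)^2 + (z:ℝ)*(a:ℝ)*(b:ℝ) + (b:ℝ)^2 = 1 := by
        intro a b h; exact_mod_cast congrArg (Int.cast : ℤ → ℝ) h
      rcases hM.lt_or_gt with hMn | hMp
      · -- z ≥ 0, M < 0
        have hQ' : (-g₁)^2 + (z:ℝ)*(-g₁)*(-g₂) + (-g₂)^2 = (M:ℝ)*(M:ℝ) := by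
          linear_combination hQg
        obtain ⟨a, b, h1, h2, h3⟩ := stmt4._crux z hz _ hKpos (-g₁) (-g₂) hQ'
        refine ⟨a*x₀ - b*y₀, a*y₀ + b*x₀ + z*b*y₀, ?_⟩
        rw [subbranch, if_pos hz, if_neg (by omega : ¬ 0 < M)]
        rw [hg1, hg2] at h2 h3
        refine ⟨?_, ?_, ?_⟩
        · show _ ∈ levelSet z M
          simp only [levelSet, Set.mem_setOf_eq]
          push_cast
          linear_combination
            ((x₀:ℝ)^2 + (z:ℝ)*(x₀:ℝ)*(y₀:ℝ) + (y₀:ℝ)^2) * (h1R a b h1) + hb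
        · simp only [orientedArea]; push_cast; linarith
        · simp only [orientedArea, Iplus]; push_cast; linarith
      · -- z ≥ 0, M > 0
        obtain ⟨a, b, h1, h2, h3⟩ := stmt4._crux z hz _ hKpos g₁ g₂ hQg
        refine ⟨a*x₀ - b*y₀, a*y₀ + b*x₀ + z*b*y₀, ?_⟩
        rw [subbranch, if_pos hz, if_pos hMp]
        rw [hg1, hg2] at h2 h3
        refine ⟨?_, ?_, ?_⟩
        · show _ ∈ levelSet z M
          simp only [levelSet, Set.mem_setOf_eq]
          push_cast
          linear_combination
            ((x₀:ℝ)^2 + (z:ℝ)*(x₀:ℝ)*(y₀:ℝ) + (y₀:ℝ)^2) * (h1R a b h1) + hb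
        · simp only [orientedArea]; push_cast; linarith
        · simp only [orientedArea, Iplus]; push_cast; linarith
    · -- z < 0 : work with w = -z ≥ 0 and reflect
      have hw : (0:ℤ) ≤ -z := by omega
      have h1R : ∀ a b : ℤ, a^2 + (-z)*a*b + b^2 = 1 →
          (a:ℝ)^2 - (z:ℝ)*(a:ℝ)*(b:ℝ) + (b:ℝ)^2 = 1 := by
        intro a b h
        have := congrArg (Int.cast : ℤ → ℝ) h
        push_cast at this; linarith [this]
      rcases hM.lt_or_gt with hMn | hMp
      · -- z < 0, M < 0
        have hQ' : (-g₁)^2 + ((-z : ℤ):ℝ)*(-g₁)*g₂ + g₂^2 = (M:ℝ)*(M:ℝ) := by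
          push_cast; linear_combination hQg
        obtain ⟨a, b, h1, h2, h3⟩ := stmt4._crux (-z) hw _ hKpos (-g₁) g₂ hQ'
        refine ⟨a*x₀ + b*y₀, a*y₀ - b*x₀ - z*b*y₀, ?_⟩
        rw [subbranch, if_neg (by omega : ¬ 0 ≤ z), if_neg (by omega : ¬ 0 < M)]
        rw [hg1, hg2] at h2 h3
        push_cast at h2 h3
        refine ⟨?_, ?_, ?_⟩
        · show _ ∈ levelSet z M
          simp only [levelSet, Set.mem_setOf_eq]
          push_cast
          linear_combination
            ((x₀:ℝ)^2 + (z:ℝ)*(x₀:ℝ)*(y₀:ℝ) + (y₀:ℝ)^2) * (h1R a b h1) + hb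
        · simp only [orientedArea]; push_cast; linarith
        · simp only [orientedArea, Iminus]; push_cast; linarith
      · -- z < 0, M > 0
        have hQ' : g₁^2 + ((-z : ℤ):ℝ)*g₁*(-g₂) + (-g₂)^2 = (M:ℝ)*(M:ℝ) := by
          push_cast; linear_combination hQg
        obtain ⟨a, b, h1, h2, h3⟩ := stmt4._crux (-z) hw _ hKpos g₁ (-g₂) hQ'
        refine ⟨a*x₀ + b*y₀, a*y₀ - b*x₀ - z*b*y₀, ?_⟩
        rw [subbranch, if_neg (by omega : ¬ 0 ≤ z), if_pos hMp]
        rw [hg1, hg2] at h2 h3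
        push_cast at h2 h3
        refine ⟨?_, ?_, ?_⟩
        · show _ ∈ levelSet z M
          simp only [levelSet, Set.mem_setOf_eq]
          push_cast
          linear_combination
            ((x₀:ℝ)^2 + (z:ℝ)*(x₀:ℝ)*(y₀:ℝ) + (y₀:ℝ)^2) * (h1R a b h1) + hb
        · simp only [orientedArea]; push_cast; linarith
        · simp only [orientedArea, Iminus]; push_cast; linarith
  · rintro ⟨⟨α, hα⟩, hall⟩
    obtain ⟨x, y, hxy⟩ := hall α hα
    refine ⟨x, y, ?_⟩
    have hmem : (((x:ℝ), (y:ℝ)) : ℝ × ℝ) ∈ levelSet z M := by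
      rw [subbranch] at hxy
      split_ifs at hxy <;> exact hxy.1
    simp only [levelSet, Set.mem_setOf_eq] at hmem
    exact_mod_cast hmem
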